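/- For every integer n ≥ 1 and every integer k, one has (1/(2n)!) Σ_{m=0}^{n} S₁(n,m;2) · 𝔅_{2m}^{(k)} = 1/(2n+1)^k. -/

import Mathlib

/-- Stirling numbers of the second kind with level `s`. -/
def stirling2Lev (s : ℕ) : ℕ → ℕ → ℕ
  | 0, 0 => 1
  | 0, _ + 1 => 0
  | _ + 1, 0 => 0
  | n + 1, k + 1 => stirling2Lev s n k + (k + 1) ^ s * stirling2Lev s n (k + 1)

/-- Stirling numbers of the first kind with level `2`. -/
def stirling1Lev2 : ℕ → ℕ → ℕ
  | 0, 0 => 1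
  | 0, _ + 1 => 0
  | _ + 1, 0 => 0
  | n + 1, k + 1 => stirling1Lev2 n k + n ^ 2 * stirling1Lev2 n (k + 1)

lemma s2_zero {s m j : ℕ} (h : m < j) : stirling2Lev s m j = 0 := by
  induction m generalizing j with
  | zero => cases j with
    | zero => omega
    | succ j => rfl
  | succ m ih =>
    cases j with
    | zero => omega
    | succ j =>
      rw [stirling2Lev, ih (by omega), ih (by omega)]
      ring
lemma s1_zero {m j : ℕ} (h : m < j) : stirling1Lev2 m j = 0 := by
  induction m generalizing j with
  | zero => cases j with
    | zero => omega
    | succ j => rfl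
  | succ m ih =>
    cases j with
    | zero => omega
    | succ j =>
      rw [stirling1Lev2, ih (by omega), ih (by omega)]
      ring
lemma s1_zero' (n : ℕ) : (n:ℤ)^2 * stirling1Lev2 n 0 = 0 := by
  cases n with
  | zero => simp
  | succ n => rw [show stirling1Lev2 (n+1) 0 = 0 from rfl]; ring

def ff (n j : ℕ) : ℤ :=
  ∑ m ∈ Finset.range (n+1), (-1)^m * stirling1Lev2 n m * stirling2Lev 2 m j

lemma ff_shift (n j : ℕ) :
    ∑ m ∈ Finset.range (n+1), (-1:ℤ)^(m+1) * stirling1Lev2 n (m+1) * stirling2Lev 2 (m+1) j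
    = ff n j - (stirling1Lev2 n 0 : ℤ) * stirling2Lev 2 0 j := by
  have h1 := Finset.sum_range_succ'
    (fun m => (-1:ℤ)^m * stirling1Lev2 n m * stirling2Lev 2 m j) (n+1)
  have h2 := Finset.sum_range_succ
    (fun m => (-1:ℤ)^m * stirling1Lev2 n m * stirling2Lev 2 m j) (n+1)
  have h3 : (-1:ℤ)^(n+1) * stirling1Lev2 n (n+1) * stirling2Lev 2 (n+1) j = 0 := by
    rw [s1_zero (Nat.lt_succ_self n)]; push_cast; ring
  rw [ff]
  have h4 : ((-1:ℤ))^0 * (stirling1Lev2 n 0 : ℤ) * stirling2Lev 2 0 j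
      = (stirling1Lev2 n 0 : ℤ) * stirling2Lev 2 0 j := by ring
  rw [h2, h3, add_zero, h4] at h1
  linarith [h1]

lemma ff_rec (n j : ℕ) :
    ff (n+1) j
    = (∑ m ∈ Finset.range (n+1), -((-1:ℤ)^m * stirling1Lev2 n m * stirling2Lev 2 (m+1) j))
      + (n:ℤ)^2 * ff n j := by
  rw [ff, Finset.sum_range_succ']
  have h0 : ((-1:ℤ))^0 * (stirling1Lev2 (n+1) 0 : ℤ) * stirling2Lev 2 0 j = 0 := by
    rw [show stirling1Lev2 (n+1) 0 = 0 from rfl]; push_cast; ring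
  rw [h0, add_zero]
  have hterm : ∀ m ∈ Finset.range (n+1),
      (-1:ℤ)^(m+1) * stirling1Lev2 (n+1) (m+1) * stirling2Lev 2 (m+1) j
      = -((-1:ℤ)^m * stirling1Lev2 n m * stirling2Lev 2 (m+1) j)
        + (n:ℤ)^2 * ((-1:ℤ)^(m+1) * stirling1Lev2 n (m+1) * stirling2Lev 2 (m+1) j) := by
    intro m _
    rw [show stirling1Lev2 (n+1) (m+1) = stirling1Lev2 n m + n^2 * stirling1Lev2 n (m+1) from rfl]
    push_cast
    ring
  rw [Finset.sum_congr rfl hterm, Finset.sum_add_distrib, ← Finset.mul_sum, ff_shift]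
  have := s1_zero' n
  congr 1
  have : (n:ℤ)^2 * ((stirling1Lev2 n 0 : ℤ) * stirling2Lev 2 0 j)
      = ((n:ℤ)^2 * stirling1Lev2 n 0) * stirling2Lev 2 0 j := by ring
  rw [mul_sub, this, s1_zero' n, zero_mul, sub_zero]

lemma ff_eq (n : ℕ) : ∀ j, ff n j = if n = j then (-1:ℤ)^n else 0 := by
  induction n with
  | zero =>
    intro j
    cases j with
    | zero => simp [ff, stirling1Lev2, stirling2Lev]
    | succ j => simp [ff, stirling1Lev2, s2_zero (Nat.succ_pos j)]
  | succ n ih =>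
    intro j
    rw [ff_rec, ih j]
    cases j with
    | zero =>
      have : ∀ m ∈ Finset.range (n+1),
          -((-1:ℤ)^m * stirling1Lev2 n m * stirling2Lev 2 (m+1) 0) = 0 := by
        intro m _
        rw [show stirling2Lev 2 (m+1) 0 = 0 from rfl]; push_cast; ring
      rw [Finset.sum_congr rfl this, Finset.sum_const_zero, zero_add]
      rcases Nat.eq_zero_or_pos n with h | h
      · subst h; simp
      · simp [(by omega : ¬ n = 0), (by omega : ¬ n + 1 = 0)]
    | succ j =>
      have hterm : ∀ m ∈ Finset.range (n+1),
          -((-1:ℤ)^m * stirling1Lev2 n m * stirling2Lev 2 (m+1) (j+1))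
          = -((-1:ℤ)^m * stirling1Lev2 n m * stirling2Lev 2 m j)
            - ((j:ℤ)+1)^2 * ((-1:ℤ)^m * stirling1Lev2 n m * stirling2Lev 2 m (j+1)) := by
        intro m _
        rw [show stirling2Lev 2 (m+1) (j+1)
            = stirling2Lev 2 m j + (j+1)^2 * stirling2Lev 2 m (j+1) from rfl]
        push_cast; ring
      rw [Finset.sum_congr rfl hterm, Finset.sum_sub_distrib, ← Finset.mul_sum]
      have hsum : ∀ j', (∑ m ∈ Finset.range (n+1),
          (-1:ℤ)^m * stirling1Lev2 n m * stirling2Lev 2 m j') = ff n j' := fun _ => rfl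
      rw [show (∑ m ∈ Finset.range (n+1), -((-1:ℤ)^m * stirling1Lev2 n m * stirling2Lev 2 m j))
          = -ff n j from by rw [← hsum j, Finset.sum_neg_distrib]]
      rw [hsum (j+1), ih j, ih (j+1)]
      by_cases h1 : n = j
      · subst h1
        rw [if_pos rfl, if_neg (by omega : ¬ n = n + 1), if_pos rfl]
        ring
      · by_cases h2 : n = j + 1
        · subst h2
          rw [if_neg h1, if_pos rfl, if_neg (by omega : ¬ j + 1 + 1 = j + 1)]
          push_cast; ring
        · rw [if_neg h1, if_neg h2, if_neg (by omega : ¬ n + 1 = j + 1)]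
          ring


/-- Poly-Bernoulli numbers with level `2`. -/
def polyBernoulliLev2 (n : ℕ) (k : ℤ) : ℚ :=
  ∑ m ∈ Finset.range (n + 1),
    (stirling2Lev 2 n m : ℚ) * (-1) ^ (n - m) * (Nat.factorial (2 * m) : ℚ)
      / ((2 * m + 1 : ℚ)) ^ k

/-- `(1/(2n)!) Σ_{m=0}^n S₁(n,m;2) 𝔅_{2m}^{(k)} = 1/(2n+1)^k`. -/
theorem stmt_11 (n : ℕ) (hn : 1 ≤ n) (k : ℤ) :
    (1 / (Nat.factorial (2 * n) : ℚ)) *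
        ∑ m ∈ Finset.range (n + 1), (stirling1Lev2 n m : ℚ) * polyBernoulliLev2 m k
      = 1 / ((2 * n + 1 : ℚ)) ^ k := by
  set c : ℕ → ℚ := fun j => (Nat.factorial (2 * j) : ℚ) / ((2 * j + 1 : ℚ)) ^ k with hc
  have hcongr : ∀ m ∈ Finset.range (n+1), (stirling1Lev2 n m : ℚ) * polyBernoulliLev2 m k
      = ∑ j ∈ Finset.range (n+1),
          ((-1:ℚ)^j * c j) * ((-1:ℚ)^m * (stirling1Lev2 n m : ℚ) * (stirling2Lev 2 m j : ℚ)) := by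
    intro m hm
    rw [polyBernoulliLev2, Finset.mul_sum]
    have hmn : m + 1 ≤ n + 1 := by simp only [Finset.mem_range] at hm; omega
    rw [Finset.sum_subset (Finset.range_subset_range.mpr hmn)
      (fun j _ hj => by
        simp only [Finset.mem_range] at hj
        rw [s2_zero (show m < j by omega)]; push_cast; ring)]
    refine Finset.sum_congr rfl fun j _ => ?_
    by_cases hjm : j ≤ m
    · have hmj : m - j + j = m := by omega
      have h1 : (-1:ℚ)^m = (-1:ℚ)^(m-j) * (-1:ℚ)^j := by rw [← pow_add, hmj]
      have h2 : (-1:ℚ)^j * (-1:ℚ)^j = 1 := by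
        rw [← pow_add]; exact Even.neg_one_pow ⟨j, rfl⟩
      rw [hc]
      simp only
      rw [h1]
      linear_combination (-((-1:ℚ)^(m-j) * (stirling1Lev2 n m : ℚ) * (stirling2Lev 2 m j : ℚ)
        * ((Nat.factorial (2*j) : ℚ)) / ((2 * (j:ℚ) + 1) ^ k))) * h2
    · rw [s2_zero (by omega)]
      push_cast; ring
  rw [Finset.sum_congr rfl hcongr, Finset.sum_comm]
  have hinner : ∀ j ∈ Finset.range (n+1),
      (∑ m ∈ Finset.range (n+1),
        ((-1:ℚ)^j * c j) * ((-1:ℚ)^m * (stirling1Lev2 n m : ℚ) * (stirling2Lev 2 m j : ℚ)))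
      = ((-1:ℚ)^j * c j) * ((ff n j : ℤ) : ℚ) := by
    intro j _
    rw [← Finset.mul_sum]
    congr 1
    rw [ff]
    push_cast
    rfl
  rw [Finset.sum_congr rfl hinner]
  have hfe : ∀ j ∈ Finset.range (n+1),
      ((-1:ℚ)^j * c j) * ((ff n j : ℤ) : ℚ)
      = if n = j then ((-1:ℚ)^n * c n) * (((-1:ℤ)^n : ℤ) : ℚ) else 0 := by
    intro j _
    rw [ff_eq n j]
    by_cases h : n = j
    · subst h; rw [if_pos rfl, if_pos rfl]
    · rw [if_neg h, if_neg h]; push_cast; ring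
  rw [Finset.sum_congr rfl hfe, Finset.sum_ite_eq (Finset.range (n+1)) n,
    if_pos (Finset.mem_range.mpr (by omega))]
  have h2 : (-1:ℚ)^n * (-1:ℚ)^n = 1 := by
    rw [← pow_add]; exact Even.neg_one_pow ⟨n, rfl⟩
  have hfne : ((Nat.factorial (2*n) : ℚ)) ≠ 0 := Nat.cast_ne_zero.mpr (Nat.factorial_ne_zero _)
  have hpne : ((2 * n + 1 : ℚ)) ^ k ≠ 0 := zpow_ne_zero k (by positivity)
  push_cast
  rw [hc]
  simp only
  field_simp
  linear_combination h2
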